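/- arXiv:math/0409013 — 4 statements merged into one kernel-verified Lean document; each statement's English description precedes it below -/
import Mathlib

section
/- MacMahon's box formula: for positive integers a, b, c, the triple product ∏_{i=1}^{a} ∏_{j=1}^{b} ∏_{k=1}^{c} (i+j+k-1)/(i+j+k-2) equals ∏_{n=0}^{a-1} n!(b+c+n)! / ((b+n)!(c+n)!). -/
open Finset

lemma macmahon_tele1 (m : ℕ) (hm : 2 ≤ m) (c : ℕ) :
    ∏ k ∈ Finset.Icc 1 c, (((m + k : ℕ) : ℚ) - 1) / (((m + k : ℕ) : ℚ) - 2)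
    = (((m + c : ℕ) : ℚ) - 1) / (((m : ℕ) : ℚ) - 1) := by
  have hm' : (2:ℚ) ≤ (m:ℚ) := by exact_mod_cast hm
  have h1 : ((m : ℚ)) - 1 ≠ 0 := by linarith
  induction c with
  | zero => simp [div_self h1]
  | succ c ih =>
    rw [Finset.prod_Icc_succ_top (by omega), ih]
    have h2 : ((m + c : ℕ) : ℚ) - 1 ≠ 0 := by push_cast; linarith
    have h3 : ((m + (c+1) : ℕ) : ℚ) - 2 = ((m + c : ℕ) : ℚ) - 1 := by push_cast; ring
    have h4 : ((m + (c+1) : ℕ) : ℚ) - 1 = ((m + c : ℕ) : ℚ) := by push_cast; ring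
    rw [h3, h4, div_mul_div_comm, mul_comm ((m:ℚ)-1) (((m+c:ℕ):ℚ)-1),
      mul_div_mul_left _ _ h2]

lemma macmahon_prodfact (x b : ℕ) :
    ∏ j ∈ Finset.Icc 1 b, ((x + j : ℕ) : ℚ)
    = (Nat.factorial (x + b) : ℚ) / (Nat.factorial x : ℚ) := by
  induction b with
  | zero =>
    simp [div_self (Nat.cast_ne_zero.mpr (Nat.factorial_ne_zero x) : (Nat.factorial x : ℚ) ≠ 0)]
  | succ b ih =>
    rw [Finset.prod_Icc_succ_top (by omega), ih,
      show x + (b+1) = (x+b)+1 from by ring, Nat.factorial_succ]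
    have h : (Nat.factorial x : ℚ) ≠ 0 := Nat.cast_ne_zero.mpr (Nat.factorial_ne_zero x)
    push_cast
    field_simp

/-- MacMahon's box formula. -/
theorem macmahon_box_formula (a b c : ℕ) (ha : 0 < a) (hb : 0 < b) (hc : 0 < c) :
    ∏ i ∈ Finset.Icc 1 a, ∏ j ∈ Finset.Icc 1 b, ∏ k ∈ Finset.Icc 1 c,
      (((i + j + k : ℕ) : ℚ) - 1) / (((i + j + k : ℕ) : ℚ) - 2)
    = ∏ n ∈ Finset.range a,
        ((Nat.factorial n : ℚ) * (Nat.factorial (b + c + n) : ℚ)) /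
          ((Nat.factorial (b + n) : ℚ) * (Nat.factorial (c + n) : ℚ)) := by
  rw [← Finset.Ico_add_one_right_eq_Icc, Finset.prod_Ico_eq_prod_range]
  refine Finset.prod_congr rfl fun n _ => ?_
  have step : ∏ j ∈ Finset.Icc 1 b, ∏ k ∈ Finset.Icc 1 c,
      ((((1+n) + j + k : ℕ) : ℚ) - 1) / ((((1+n) + j + k : ℕ) : ℚ) - 2)
      = ∏ j ∈ Finset.Icc 1 b, ((((n+c) + j : ℕ) : ℚ) / (((n + j : ℕ)) : ℚ)) := by
    refine Finset.prod_congr rfl fun j hj => ?_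
    have hj1 : 1 ≤ j := (Finset.mem_Icc.mp hj).1
    rw [macmahon_tele1 ((1+n)+j) (by omega) c]
    have hnj : ((n + j : ℕ) : ℚ) ≠ 0 := by
      have : n + j ≠ 0 := by omega
      exact_mod_cast this
    push_cast
    ring
  rw [step, Finset.prod_div_distrib, macmahon_prodfact (n+c) b, macmahon_prodfact n b]
  have e1 : n + c + b = b + c + n := by ring
  have e2 : n + b = b + n := by ring
  rw [e1, e2]
  have f1 : (Nat.factorial (n+c) : ℚ) ≠ 0 := Nat.cast_ne_zero.mpr (Nat.factorial_ne_zero _)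
  have f2 : (Nat.factorial n : ℚ) ≠ 0 := Nat.cast_ne_zero.mpr (Nat.factorial_ne_zero _)
  have f3 : (Nat.factorial (b+n) : ℚ) ≠ 0 := Nat.cast_ne_zero.mpr (Nat.factorial_ne_zero _)
  have f4 : (Nat.factorial (c+n) : ℚ) ≠ 0 := Nat.cast_ne_zero.mpr (Nat.factorial_ne_zero _)
  rw [show c + n = n + c from by ring]
  field_simp
end

section
/- Gaussian integral identity for Hermite polynomials: for real α with |α| < 1 and real y, ∫_ℝ e^{-(x-y)²} H_n(αx) dx = √π (1-α²)^{n/2} H_n(αy/√(1-α²)). -/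
open Finset

/-- The physicists' Hermite polynomial `H_n(x)`, given by its explicit sum. -/
noncomputable def hermiteH (n : ℕ) (x : ℝ) : ℝ :=
  ∑ m ∈ Finset.range (n / 2 + 1),
    (-1 : ℝ) ^ m * (Nat.factorial n : ℝ) /
      ((Nat.factorial m : ℝ) * (Nat.factorial (n - 2 * m) : ℝ)) * (2 * x) ^ (n - 2 * m)

open Filter MeasureTheory Polynomial

noncomputable def cH (n m : ℕ) : ℝ :=
  (-1 : ℝ) ^ m * (Nat.factorial n : ℝ) /
      ((Nat.factorial m : ℝ) * (Nat.factorial (n - 2 * m) : ℝ))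

lemma cH_deriv (n m : ℕ) (h : 2 * m ≤ n) :
    cH (n+1) m * ((n + 1 - 2*m : ℕ) : ℝ) * 2 = 2 * (n+1) * cH n m := by
  obtain ⟨j, rfl⟩ : ∃ j, n = j + 2*m := ⟨n - 2*m, by omega⟩
  have e1 : j + 2*m + 1 - 2*m = j + 1 := by omega
  have e2 : j + 2*m - 2*m = j := by omega
  simp only [cH, e1, e2, Nat.factorial_succ]
  have h1 : ((Nat.factorial m : ℝ)) ≠ 0 := by positivity
  have h2 : ((Nat.factorial j : ℝ)) ≠ 0 := by positivity
  push_cast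
  field_simp

lemma cH_sub1 (n m : ℕ) (hm : 1 ≤ m) (h2 : 2 * m ≤ n + 1) :
    cH (n+2) m = cH (n+1) m - 2*(n+1) * cH n (m-1) := by
  obtain ⟨k, rfl⟩ : ∃ k, m = k + 1 := ⟨m - 1, by omega⟩
  obtain ⟨j, rfl⟩ : ∃ j, n = j + (2*k+1) := ⟨n - (2*k+1), by omega⟩
  have e1 : j + (2*k+1) + 2 - 2*(k+1) = j + 1 := by omega
  have e2 : j + (2*k+1) + 1 - 2*(k+1) = j := by omega
  have e3 : j + (2*k+1) - 2*k = j + 1 := by omega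
  simp only [cH, e1, e2, e3, Nat.add_sub_cancel, Nat.factorial_succ]
  have h1 : ((Nat.factorial k : ℝ)) ≠ 0 := by positivity
  have h2 : ((Nat.factorial j : ℝ)) ≠ 0 := by positivity
  push_cast
  rw [pow_succ]
  field_simp
  ring

lemma cH_sub2 (k : ℕ) :
    cH (2*k+2) (k+1) = -(2*(2*k+1)) * cH (2*k) k := by
  have e1 : 2*k+2 - 2*(k+1) = 0 := by omega
  have e2 : 2*k - 2*k = 0 := by omega
  simp only [cH, e1, e2, Nat.factorial_zero]
  have h1 : ((Nat.factorial (k+1) : ℝ)) ≠ 0 := by positivity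
  have h4 : ((Nat.factorial k : ℝ)) ≠ 0 := by positivity
  have e3 : Nat.factorial (2*k+2) = (2*k+2) * ((2*k+1) * Nat.factorial (2*k)) := by
    rw [show 2*k+2 = (2*k+1)+1 by ring, Nat.factorial_succ, Nat.factorial_succ]
  rw [e3, Nat.factorial_succ]
  push_cast
  rw [pow_succ]
  field_simp




lemma hermiteH_eq (n : ℕ) (x : ℝ) :
    hermiteH n x = ∑ m ∈ Finset.range (n / 2 + 1), cH n m * (2 * x) ^ (n - 2 * m) := rfl

lemma hermiteH_zero (x : ℝ) : hermiteH 0 x = 1 := by simp [hermiteH]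
lemma hermiteH_one (x : ℝ) : hermiteH 1 x = 2 * x := by simp [hermiteH]

lemma cH_zero (n : ℕ) : cH n 0 = 1 := by
  have h : ((Nat.factorial n : ℝ)) ≠ 0 := by positivity
  simp [cH, h]


lemma hermiteH_hasDerivAt (n : ℕ) (x : ℝ) :
    HasDerivAt (fun x => hermiteH (n+1) x) (2*(n+1) * hermiteH n x) x := by
  have H : HasDerivAt (fun x => hermiteH (n+1) x)
      (∑ m ∈ Finset.range ((n+1)/2 + 1),
        cH (n+1) m * (((n+1-2*m : ℕ):ℝ) * (2*x)^(n+1-2*m-1) * 2)) x := by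
    simp only [hermiteH_eq]
    apply HasDerivAt.fun_sum
    intro m _
    have inner : HasDerivAt (fun x : ℝ => 2*x) 2 x := by simpa using (hasDerivAt_id x).const_mul 2
    have hp : HasDerivAt (fun x : ℝ => (2*x)^(n+1-2*m))
        (((n+1-2*m:ℕ):ℝ) * (2*x)^(n+1-2*m-1) * 2) x := by
      simpa [Function.comp_def] using (hasDerivAt_pow (n+1-2*m) (2*x)).comp x inner
    exact hp.const_mul _
  convert H using 1
  rw [hermiteH_eq, Finset.mul_sum]
  have hsub : Finset.range (n/2 + 1) ⊆ Finset.range ((n+1)/2 + 1) :=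
    Finset.range_subset_range.2 (by omega)
  rw [← Finset.sum_subset hsub (fun m hm1 hm2 => ?_)]
  · apply Finset.sum_congr rfl
    intro m hm
    rw [Finset.mem_range] at hm
    have h2m : 2*m ≤ n := by omega
    rw [show n+1-2*m-1 = n-2*m from by omega]
    linear_combination (-(2*x)^(n-2*m)) * cH_deriv n m h2m
  · rw [Finset.mem_range] at hm1 hm2
    have : n+1-2*m = 0 := by omega
    rw [this]
    simp

lemma hermiteH_rec (n : ℕ) (x : ℝ) :
    hermiteH (n+2) x = 2*x * hermiteH (n+1) x - 2*(n+1) * hermiteH n x := by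
  have hD : ∀ m : ℕ, True := fun _ => trivial
  set t := 2*x with ht
  set D : ℕ → ℝ := fun m => match m with
    | 0 => 0
    | (k+1) => 2*((n:ℝ)+1) * (cH n k * t^(n-2*k)) with hDdef
  have hshift : ∑ m ∈ Finset.range (n/2 + 2), D m
      = ∑ k ∈ Finset.range (n/2 + 1), 2*((n:ℝ)+1) * (cH n k * t^(n-2*k)) := by
    rw [Finset.sum_range_succ']
    simp [hDdef]
  have key : ∑ m ∈ Finset.range (n/2 + 2), (cH (n+2) m * t^(n+2-2*m) + D m)
      = ∑ m ∈ Finset.range ((n+1)/2 + 1), cH (n+1) m * t^(n+2-2*m) := by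
    have hsub : Finset.range ((n+1)/2 + 1) ⊆ Finset.range (n/2 + 2) :=
      Finset.range_subset_range.2 (by omega)
    rw [← Finset.sum_subset hsub (fun m hm1 hm2 => ?_)]
    · apply Finset.sum_congr rfl
      intro m hm
      rw [Finset.mem_range] at hm
      match m with
      | 0 => simp [hDdef, cH_zero]
      | (k+1) =>
        have h2m : 2*(k+1) ≤ n+1 := by omega
        have := cH_sub1 n (k+1) (by omega) h2m
        simp only [Nat.add_sub_cancel] at this
        have hexp : n - 2*k = n+2-2*(k+1) := by omega
        simp only [hDdef, hexp]
        rw [this]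
        ring
    · -- vanishing terms : m ∈ range (n/2+2) \ range((n+1)/2+1)
      rw [Finset.mem_range] at hm1 hm2
      have hne : n % 2 = 0 ∧ m = n/2 + 1 := by omega
      obtain ⟨hpar, rfl⟩ := hne
      obtain ⟨k, rfl⟩ : ∃ k, n = 2*k := ⟨n/2, by omega⟩
      have hk : 2*k/2 = k := by omega
      simp only [hDdef, hk]
      have e0 : 2*k+2-2*(k+1) = 0 := by omega
      have e1 : 2*k-2*k = 0 := by omega
      rw [show 2*k+2 = 2*k+2 from rfl, e0]
      have := cH_sub2 k
      rw [show 2*k + 2 - 2*(k+1) = 0 from by omega] at *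
      simp only [e1, pow_zero, mul_one]
      rw [this]
      push_cast
      ring
  -- now assemble
  rw [hermiteH_eq, hermiteH_eq, hermiteH_eq]
  rw [show (n+2)/2 + 1 = n/2 + 2 from by omega]
  rw [Finset.mul_sum, Finset.mul_sum]
  have expand : ∀ m ∈ Finset.range ((n+1)/2 + 1),
      2*x * (cH (n+1) m * t^(n+1-2*m)) = cH (n+1) m * t^(n+2-2*m) := by
    intro m hm
    rw [Finset.mem_range] at hm
    rw [show n+2-2*m = (n+1-2*m)+1 from by omega, pow_succ, ht]
    ring
  rw [Finset.sum_congr rfl expand]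
  rw [← key, Finset.sum_add_distrib, hshift]
  ring


lemma gauss_decay (y : ℝ) (k : ℕ) (x : ℝ) :
    |Real.exp (-(x-y)^2) * x ^ k| ≤
      (Nat.factorial k * Real.exp (|y| + 1/2)) * Real.exp (-(1/2) * (x-y)^2) := by
  rw [abs_mul, abs_of_pos (Real.exp_pos _), abs_pow]
  have h1 : |x| ^ k ≤ Nat.factorial k * Real.exp |x| := by
    have hs : |x|^k / (Nat.factorial k) ≤ Real.exp |x| := by
      refine le_trans ?_ (Real.sum_le_exp_of_nonneg (abs_nonneg x) (k+1))
      exact Finset.single_le_sum (f := fun i => |x|^i / Nat.factorial i)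
        (fun i _ => by positivity) (Finset.mem_range.2 (Nat.lt_succ_self k))
    calc |x|^k = Nat.factorial k * (|x|^k / Nat.factorial k) := by
          field_simp
      _ ≤ Nat.factorial k * Real.exp |x| :=
          mul_le_mul_of_nonneg_left hs (by positivity)
  have h2 : Real.exp |x| ≤ Real.exp |y| * Real.exp |x - y| := by
    rw [← Real.exp_add]
    apply Real.exp_le_exp.2
    calc |x| = |y + (x - y)| := by rw [show y + (x - y) = x from by ring]
      _ ≤ |y| + |x - y| := abs_add_le _ _
  have h3 : Real.exp (-(x-y)^2) * Real.exp |x-y| ≤ Real.exp (1/2) * Real.exp (-(1/2)*(x-y)^2) := by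
    rw [← Real.exp_add, ← Real.exp_add]
    apply Real.exp_le_exp.2
    nlinarith [sq_nonneg (|x - y| - 1), sq_abs (x - y)]
  calc Real.exp (-(x-y)^2) * |x|^k
      ≤ Real.exp (-(x-y)^2) * (Nat.factorial k * (Real.exp |y| * Real.exp |x-y|)) := by
        refine mul_le_mul_of_nonneg_left ?_ (Real.exp_pos _).le
        exact h1.trans (mul_le_mul_of_nonneg_left h2 (by positivity))
    _ = (Nat.factorial k * Real.exp |y|) * (Real.exp (-(x-y)^2) * Real.exp |x-y|) := by ring
    _ ≤ (Nat.factorial k * Real.exp |y|) * (Real.exp (1/2) * Real.exp (-(1/2)*(x-y)^2)) :=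
        mul_le_mul_of_nonneg_left h3 (by positivity)
    _ = (Nat.factorial k * Real.exp (|y| + 1/2)) * Real.exp (-(1/2)*(x-y)^2) := by
        rw [Real.exp_add]; ring

lemma integrable_gauss_shift (y : ℝ) :
    Integrable (fun x : ℝ => Real.exp (-(1/2) * (x-y)^2)) := by
  have h := (integrable_exp_neg_mul_sq (by norm_num : (0:ℝ) < 1/2)).comp_add_right (-y)
  simpa [sub_eq_add_neg] using h

lemma integrable_gauss_pow (y : ℝ) (k : ℕ) :
    Integrable (fun x : ℝ => Real.exp (-(x-y)^2) * x ^ k) := by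
  have hg : Integrable (fun x : ℝ =>
      (Nat.factorial k * Real.exp (|y|+1/2)) * Real.exp (-(1/2) * (x-y)^2)) :=
    (integrable_gauss_shift y).const_mul _
  refine hg.mono' ?_ ?_
  · exact (Continuous.mul (by continuity) (by continuity)).aestronglyMeasurable
  · filter_upwards with x
    rw [Real.norm_eq_abs]
    exact gauss_decay y k x

lemma integrable_gauss_poly (y : ℝ) (p : Polynomial ℝ) :
    Integrable (fun x : ℝ => Real.exp (-(x-y)^2) * Polynomial.eval x p) := by
  have he : (fun x : ℝ => Real.exp (-(x-y)^2) * p.eval x)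
      = fun x => ∑ i ∈ Finset.range (p.natDegree + 1),
          p.coeff i * (Real.exp (-(x-y)^2) * x ^ i) := by
    funext x
    rw [Polynomial.eval_eq_sum_range, Finset.mul_sum]
    exact Finset.sum_congr rfl (fun i _ => by ring)
  rw [he]
  exact integrable_finset_sum _ (fun i _ => (integrable_gauss_pow y i).const_mul _)

lemma tendsto_gauss_exp (y : ℝ) (l : Filter ℝ)
    (hl : Tendsto (fun x : ℝ => |x - y|) l atTop) :
    Tendsto (fun x : ℝ => Real.exp (-(1/2) * (x-y)^2)) l (nhds 0) := by
  rw [Real.tendsto_exp_comp_nhds_zero]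
  have h1 : Tendsto (fun x : ℝ => |x - y|^2) l atTop :=
    (tendsto_pow_atTop (by norm_num : (2:ℕ) ≠ 0)).comp hl
  have h2 : Tendsto (fun x : ℝ => -(1/2) * |x - y|^2) l atBot := by
    apply Tendsto.comp (g := fun t : ℝ => -(1/2) * t) ?_ h1
    exact tendsto_id.const_mul_atTop_of_neg (by norm_num)
  convert h2 using 2 with x
  rw [sq_abs]

lemma tendsto_gauss_poly (y : ℝ) (p : Polynomial ℝ) (l : Filter ℝ)
    (hl : Tendsto (fun x : ℝ => |x - y|) l atTop) :
    Tendsto (fun x : ℝ => Real.exp (-(x-y)^2) * Polynomial.eval x p) l (nhds 0) := by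
  have he : (fun x : ℝ => Real.exp (-(x-y)^2) * p.eval x)
      = fun x => ∑ i ∈ Finset.range (p.natDegree + 1),
          p.coeff i * (Real.exp (-(x-y)^2) * x ^ i) := by
    funext x
    rw [Polynomial.eval_eq_sum_range, Finset.mul_sum]
    exact Finset.sum_congr rfl (fun i _ => by ring)
  rw [he]
  have : ∑ i ∈ Finset.range (p.natDegree + 1), (0:ℝ) = 0 := by simp
  rw [show (0:ℝ) = ∑ i ∈ Finset.range (p.natDegree + 1), (0:ℝ) from this.symm]
  apply tendsto_finset_sum
  intro i _
  refine squeeze_zero_norm (f := fun x => p.coeff i * (Real.exp (-(x-y)^2) * x ^ i))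
      (a := fun x => |p.coeff i| *
      ((Nat.factorial i * Real.exp (|y|+1/2)) * Real.exp (-(1/2) * (x-y)^2))) ?_ ?_
  · intro x
    rw [Real.norm_eq_abs, abs_mul]
    exact mul_le_mul_of_nonneg_left (gauss_decay y i x) (abs_nonneg _)
  · have := (tendsto_gauss_exp y l hl).const_mul
      (|p.coeff i| * (Nat.factorial i * Real.exp (|y|+1/2)))
    simpa [mul_assoc] using this

lemma abs_sub_tendsto_atTop (y : ℝ) : Tendsto (fun x : ℝ => |x - y|) atTop atTop :=
  (tendsto_abs_atTop_atTop.comp (tendsto_atTop_add_const_right _ (-y) tendsto_id)).congr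
    (fun x => by simp [Function.comp, sub_eq_add_neg])

lemma abs_sub_tendsto_atBot (y : ℝ) : Tendsto (fun x : ℝ => |x - y|) atBot atTop :=
  (tendsto_abs_atBot_atTop.comp (tendsto_atBot_add_const_right _ (-y) tendsto_id)).congr
    (fun x => by simp [Function.comp, sub_eq_add_neg])

lemma gauss_ibp (y : ℝ) (p : Polynomial ℝ) :
    ∫ x : ℝ, (Real.exp (-(x-y)^2) * (Polynomial.derivative p).eval x
      - 2*(x-y) * Real.exp (-(x-y)^2) * p.eval x) = 0 := by
  set g : ℝ → ℝ := fun x => Real.exp (-(x-y)^2) * p.eval x with hg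
  set g' : ℝ → ℝ := fun x => Real.exp (-(x-y)^2) * (Polynomial.derivative p).eval x
      - 2*(x-y) * Real.exp (-(x-y)^2) * p.eval x with hg'
  have hd : ∀ x : ℝ, HasDerivAt g (g' x) x := by
    intro x
    have h1 : HasDerivAt (fun x : ℝ => -(x-y)^2) (-(2*(x-y))) x := by
      have h0 : HasDerivAt (fun x : ℝ => x - y) 1 x := (hasDerivAt_id x).sub_const y
      have := (h0.fun_pow 2).fun_neg
      simpa [mul_comm] using this
    have hexp : HasDerivAt (fun x : ℝ => Real.exp (-(x-y)^2))
        (Real.exp (-(x-y)^2) * (-(2*(x-y)))) x := by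
      simpa [Function.comp_def] using (Real.hasDerivAt_exp (-(x-y)^2)).comp x h1
    have := hexp.fun_mul (Polynomial.hasDerivAt p x)
    refine this.congr_deriv ?_
    simp only [hg']
    ring
  have hint : Integrable g' := by
    have h1 := integrable_gauss_poly y (Polynomial.derivative p)
    have h2 := integrable_gauss_poly y ((2:Polynomial ℝ)*(Polynomial.X - Polynomial.C y)*p)
    have h2' : Integrable (fun x : ℝ => 2*(x-y) * Real.exp (-(x-y)^2) * p.eval x) := by
      refine h2.congr ?_
      filter_upwards with x
      simp only [Polynomial.eval_mul, Polynomial.eval_ofNat, Polynomial.eval_sub,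
        Polynomial.eval_X, Polynomial.eval_C]
      ring
    exact h1.sub h2'
  have htop : Tendsto g atTop (nhds 0) := tendsto_gauss_poly y p _ (abs_sub_tendsto_atTop y)
  have hbot : Tendsto g atBot (nhds 0) := tendsto_gauss_poly y p _ (abs_sub_tendsto_atBot y)
  have hIoi : ∫ x in Set.Ioi (0:ℝ), g' x = 0 - g 0 :=
    MeasureTheory.integral_Ioi_of_hasDerivAt_of_tendsto' (fun x _ => hd x)
      hint.integrableOn htop
  have hIic : ∫ x in Set.Iic (0:ℝ), g' x = g 0 - 0 :=
    MeasureTheory.integral_Iic_of_hasDerivAt_of_tendsto' (fun x _ => hd x)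
      hint.integrableOn hbot
  have hsplit := intervalIntegral.integral_Iic_add_Ioi (μ := MeasureTheory.volume)
    (b := (0:ℝ)) (f := g') hint.integrableOn hint.integrableOn
  have : ∫ x : ℝ, g' x = 0 := by
    rw [← hsplit, hIoi, hIic]; ring
  exact this


noncomputable def hermPoly (n : ℕ) (a : ℝ) : Polynomial ℝ :=
  ∑ m ∈ Finset.range (n / 2 + 1),
    Polynomial.C (cH n m) * (Polynomial.C (2*a) * Polynomial.X) ^ (n - 2*m)

lemma hermPoly_eval (n : ℕ) (a x : ℝ) : (hermPoly n a).eval x = hermiteH n (a * x) := by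
  rw [hermiteH_eq, hermPoly, Polynomial.eval_finset_sum]
  refine Finset.sum_congr rfl (fun m _ => ?_)
  simp only [Polynomial.eval_mul, Polynomial.eval_pow, Polynomial.eval_C, Polynomial.eval_X]
  ring

lemma hermPoly_deriv_eval (n : ℕ) (a x : ℝ) :
    (Polynomial.derivative (hermPoly (n+1) a)).eval x = 2*((n:ℝ)+1) * hermiteH n (a*x) * a := by
  have h1 := Polynomial.hasDerivAt (hermPoly (n+1) a) x
  have hinner : HasDerivAt (fun x : ℝ => a*x) a x := by
    simpa using (hasDerivAt_id x).const_mul a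
  have h2 : HasDerivAt (fun x : ℝ => hermiteH (n+1) (a*x))
      (2*((n:ℝ)+1) * hermiteH n (a*x) * a) x :=
    (hermiteH_hasDerivAt n (a*x)).comp x hinner
  have hfun : (fun x : ℝ => Polynomial.eval x (hermPoly (n+1) a))
      = fun x : ℝ => hermiteH (n+1) (a*x) := funext (fun x => hermPoly_eval (n+1) a x)
  rw [hfun] at h1
  exact h1.unique h2

lemma integral_gauss_base (y : ℝ) :
    ∫ x : ℝ, Real.exp (-(x-y)^2) = Real.sqrt Real.pi := by
  have ht := MeasureTheory.integral_add_right_eq_self (μ := MeasureTheory.volume)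
    (fun x : ℝ => Real.exp (-x^2)) (-y)
  have h1 : ∫ x : ℝ, Real.exp (-(x-y)^2) = ∫ x : ℝ, Real.exp (-x^2) := by
    simp only [sub_eq_add_neg]
    exact ht
  rw [h1]
  have := integral_gaussian (1:ℝ)
  simpa using this

lemma key2 (y : ℝ) (p : Polynomial ℝ) :
    ∫ x : ℝ, (x-y) * Real.exp (-(x-y)^2) * Polynomial.eval x p
      = (1/2) * ∫ x : ℝ, Real.exp (-(x-y)^2) * Polynomial.eval x (Polynomial.derivative p) := by
  have h := gauss_ibp y p
  have h1 := integrable_gauss_poly y (Polynomial.derivative p)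
  have h2 := integrable_gauss_poly y ((2:Polynomial ℝ)*(Polynomial.X - Polynomial.C y)*p)
  have h2' : Integrable (fun x : ℝ => 2*(x-y) * Real.exp (-(x-y)^2) * Polynomial.eval x p) := by
    refine h2.congr ?_
    filter_upwards with x
    simp only [Polynomial.eval_mul, Polynomial.eval_ofNat, Polynomial.eval_sub,
      Polynomial.eval_X, Polynomial.eval_C]
    ring
  rw [MeasureTheory.integral_sub h1 h2'] at h
  have h3 : ∫ x : ℝ, 2*(x-y) * Real.exp (-(x-y)^2) * Polynomial.eval x p
      = 2 * ∫ x : ℝ, (x-y) * Real.exp (-(x-y)^2) * Polynomial.eval x p := by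
    rw [← MeasureTheory.integral_const_mul]
    congr 1; funext x; ring
  rw [h3] at h
  linarith

/-- Gaussian integral identity for Hermite polynomials:
`∫ e^{-(x-y)²} H_n(αx) dx = √π (1-α²)^{n/2} H_n(αy/√(1-α²))`. -/
theorem hermite_gaussian_integral (α y : ℝ) (hα : |α| < 1) (n : ℕ) :
    ∫ x : ℝ, Real.exp (-(x - y) ^ 2) * hermiteH n (α * x)
      = Real.sqrt Real.pi * (Real.sqrt (1 - α ^ 2)) ^ n *
          hermiteH n (α * y / Real.sqrt (1 - α ^ 2)) := by
  have hβ2 : (0:ℝ) < 1 - α^2 := by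
    nlinarith [sq_abs α, abs_nonneg α]
  set β := Real.sqrt (1 - α^2) with hβ
  have hβpos : 0 < β := Real.sqrt_pos.2 hβ2
  have hβsq : β^2 = 1 - α^2 := Real.sq_sqrt hβ2.le
  induction n using Nat.twoStepInduction with
  | zero =>
    simp only [hermiteH_zero, mul_one, pow_zero]
    rw [integral_gauss_base y]
  | one =>
    simp only [hermiteH_one]
    have hsplit : (fun x : ℝ => Real.exp (-(x - y) ^ 2) * (2*(α*x)))
        = fun x : ℝ => α * (2*(x-y) * Real.exp (-(x-y)^2) * Polynomial.eval x (Polynomial.C 1))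
            + (2*α*y) * Real.exp (-(x-y)^2) := by
      funext x; simp only [Polynomial.eval_C]; ring
    rw [hsplit]
    have h2 := integrable_gauss_poly y ((2:Polynomial ℝ)*(Polynomial.X - Polynomial.C y)*(Polynomial.C 1))
    have h2' : Integrable (fun x : ℝ => 2*(x-y) * Real.exp (-(x-y)^2) * Polynomial.eval x (Polynomial.C 1)) := by
      refine h2.congr ?_
      filter_upwards with x
      simp only [Polynomial.eval_mul, Polynomial.eval_ofNat, Polynomial.eval_sub,
        Polynomial.eval_X, Polynomial.eval_C, Polynomial.eval_one]
      ring
    have h0 : Integrable (fun x : ℝ => Real.exp (-(x-y)^2)) := by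
      have := integrable_gauss_poly y 1
      simpa using this
    rw [MeasureTheory.integral_add (h2'.const_mul α) (h0.const_mul _),
      MeasureTheory.integral_const_mul, MeasureTheory.integral_const_mul]
    have hk := key2 y (Polynomial.C 1)
    simp only [Polynomial.derivative_C, Polynomial.eval_zero, mul_zero,
      MeasureTheory.integral_zero] at hk
    have hk' : ∫ x : ℝ, 2*(x-y) * Real.exp (-(x-y)^2) * Polynomial.eval x (Polynomial.C 1) = 0 := by
      have h3 : ∫ x : ℝ, 2*(x-y) * Real.exp (-(x-y)^2) * Polynomial.eval x (Polynomial.C 1)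
          = 2 * ∫ x : ℝ, (x-y) * Real.exp (-(x-y)^2) * Polynomial.eval x (Polynomial.C 1) := by
        rw [← MeasureTheory.integral_const_mul]
        congr 1; funext x; ring
      rw [h3, hk]; ring
    rw [hk', integral_gauss_base y]
    have hβne : β ≠ 0 := hβpos.ne'
    field_simp
    ring
  | more n ih2 ih1 =>
    -- ih2 : statement for n, ih1 : statement for n+1
    set E : ℝ → ℝ := fun x => Real.exp (-(x - y) ^ 2) with hE
    have hrec : (fun x : ℝ => E x * hermiteH (n+2) (α*x))
        = fun x : ℝ => 2*α * (x * E x * hermiteH (n+1) (α*x))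
            - 2*((n:ℝ)+1) * (E x * hermiteH n (α*x)) := by
      funext x
      rw [hermiteH_rec n (α*x)]
      push_cast
      ring
    have I0 : Integrable (fun x : ℝ => E x * hermiteH n (α*x)) := by
      have := integrable_gauss_poly y (hermPoly n α)
      refine this.congr ?_
      filter_upwards with x
      rw [hermPoly_eval]
    have I1 : Integrable (fun x : ℝ => E x * hermiteH (n+1) (α*x)) := by
      have := integrable_gauss_poly y (hermPoly (n+1) α)
      refine this.congr ?_
      filter_upwards with x
      rw [hermPoly_eval]
    have Ix : Integrable (fun x : ℝ => x * E x * hermiteH (n+1) (α*x)) := by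
      have := integrable_gauss_poly y (Polynomial.X * hermPoly (n+1) α)
      refine this.congr ?_
      filter_upwards with x
      rw [Polynomial.eval_mul, Polynomial.eval_X, hermPoly_eval]
      ring
    have Ixy : Integrable (fun x : ℝ => (x-y) * E x * hermiteH (n+1) (α*x)) := by
      have := integrable_gauss_poly y ((Polynomial.X - Polynomial.C y) * hermPoly (n+1) α)
      refine this.congr ?_
      filter_upwards with x
      rw [Polynomial.eval_mul, Polynomial.eval_sub, Polynomial.eval_X, Polynomial.eval_C,
        hermPoly_eval]
      ring
    -- key step: ∫ (x-y) E H1 = (n+1) α ∫ E H0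
    have hkey : ∫ x : ℝ, (x-y) * E x * hermiteH (n+1) (α*x)
        = ((n:ℝ)+1) * α * ∫ x : ℝ, E x * hermiteH n (α*x) := by
      have hcongr : (fun x : ℝ => (x-y) * E x * hermiteH (n+1) (α*x))
          = fun x : ℝ => (x-y) * Real.exp (-(x-y)^2) * Polynomial.eval x (hermPoly (n+1) α) := by
        funext x; rw [hermPoly_eval]
      rw [hcongr, key2 y (hermPoly (n+1) α)]
      have : (fun x : ℝ => Real.exp (-(x-y)^2) * Polynomial.eval x (Polynomial.derivative (hermPoly (n+1) α)))
          = fun x : ℝ => (2*((n:ℝ)+1)*α) * (E x * hermiteH n (α*x)) := by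
        funext x
        rw [hermPoly_deriv_eval]
        ring
      rw [this, MeasureTheory.integral_const_mul]
      ring
    have hxsplit : ∫ x : ℝ, x * E x * hermiteH (n+1) (α*x)
        = (∫ x : ℝ, (x-y) * E x * hermiteH (n+1) (α*x))
          + y * ∫ x : ℝ, E x * hermiteH (n+1) (α*x) := by
      rw [← MeasureTheory.integral_const_mul, ← MeasureTheory.integral_add Ixy (I1.const_mul y)]
      congr 1; funext x; ring
    have hmain : ∫ x : ℝ, E x * hermiteH (n+2) (α*x)
        = 2*α*y * (∫ x : ℝ, E x * hermiteH (n+1) (α*x))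
          + (2*((n:ℝ)+1)*α^2 - 2*((n:ℝ)+1)) * ∫ x : ℝ, E x * hermiteH n (α*x) := by
      rw [hrec, MeasureTheory.integral_sub (Ix.const_mul _) (I0.const_mul _),
        MeasureTheory.integral_const_mul, MeasureTheory.integral_const_mul,
        hxsplit, hkey]
      ring
    rw [hmain, ih1, ih2]
    rw [hermiteH_rec n (α * y / β)]
    have hα2 : α^2 = 1 - β^2 := by linarith
    rw [hα2]
    push_cast
    field_simp
    ring
end

section
/- Lindström–Gessel–Viennot for non-intersecting simple walks: the number of families of a non-intersecting simple symmetric lattice paths on ℤ from (0, 2j), 0 ≤ j ≤ a−1, to (b+c, c−b+2j), 0 ≤ j ≤ a−1, equals det(C(b+c, (c−b+2(k−j)+b+c)/2))_{j,k=0}^{a−1} = det(C(b+c, c+k−j))_{j,k=0}^{a−1}. -/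
open Finset

/-- Binomial coefficient `C(n,k)` for an integer `k`, vanishing outside `0 ≤ k ≤ n`. -/
def chooseZ (n : ℕ) (k : ℤ) : ℕ :=
  if 0 ≤ k ∧ k ≤ (n : ℤ) then n.choose k.toNat else 0

lemma chooseZ_eq (n : ℕ) (k : ℤ) : chooseZ n k = if 0 ≤ k then n.choose k.toNat else 0 := by
  unfold chooseZ
  split_ifs with h1 h2 h2 <;> try rfl
  · exact absurd h2 (not_not.2 h1.1)
  · push_neg at h1
    have hk : (n:ℤ) < k := h1 h2
    exact (Nat.choose_eq_zero_of_lt (by omega)).symm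

def w : ℕ → ℤ → ℕ
  | 0, d => if d = 0 then 1 else 0
  | n+1, d => w n (d + 1) + w n (d - 1)

lemma chooseZ_succ (n : ℕ) (m : ℤ) :
    chooseZ (n+1) m = chooseZ n m + chooseZ n (m-1) := by
  rcases lt_trichotomy m 0 with h | h | h
  · rw [chooseZ_eq, chooseZ_eq, chooseZ_eq, if_neg (by omega), if_neg (by omega), if_neg (by omega)]
  · subst h
    rw [chooseZ_eq, chooseZ_eq, chooseZ_eq, if_pos le_rfl, if_pos le_rfl, if_neg (by omega)]
    simp
  · obtain ⟨k, rfl⟩ : ∃ k : ℕ, m = (k:ℤ) + 1 := ⟨(m-1).toNat, by omega⟩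
    simp only [chooseZ_eq, if_pos (by omega : (0:ℤ) ≤ (k:ℤ)+1), if_pos (by omega : (0:ℤ) ≤ (k:ℤ)+1-1)]
    have h1 : ((k:ℤ)+1).toNat = k + 1 := by omega
    have h2 : ((k:ℤ)+1-1).toNat = k := by omega
    rw [h1, h2, Nat.choose_succ_succ']
    omega

lemma w_eq_chooseZ (n : ℕ) (m : ℤ) : w n (2 * m - n) = chooseZ n m := by
  induction n generalizing m with
  | zero =>
    simp only [w, chooseZ_eq, Nat.cast_zero, sub_zero]
    rcases eq_or_ne m 0 with rfl | h
    · simp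
    · rw [if_neg (by omega)]
      split_ifs with h2
      · exact (Nat.choose_eq_zero_of_lt (by omega)).symm
      · rfl
  | succ n ih =>
    have e1 : 2 * m - (↑(n+1):ℤ) + 1 = 2 * m - n := by push_cast; ring
    have e2 : 2 * m - (↑(n+1):ℤ) - 1 = 2 * (m-1) - n := by push_cast; ring
    rw [show w (n+1) (2*m - (↑(n+1):ℤ)) = w n (2*m - (↑(n+1):ℤ) + 1) + w n (2*m - (↑(n+1):ℤ) - 1) from rfl,
      e1, e2, ih, ih, chooseZ_succ]

def IsPF (a n : ℕ) (x y : Fin a → ℤ) (p : Fin a → Fin (n+1) → ℤ) : Prop :=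
  (∀ j : Fin a, p j 0 = x j) ∧
  (∀ j : Fin a, p j (Fin.last n) = y j) ∧
  (∀ (j : Fin a) (t : Fin n),
    p j t.succ - p j t.castSucc = 1 ∨ p j t.succ - p j t.castSucc = -1) ∧
  (∀ (t : Fin (n+1)) (j k : Fin a), j ≠ k → p j t ≠ p k t)

instance isPF_finite (a n : ℕ) (x y : Fin a → ℤ) :
    Finite {p : Fin a → Fin (n+1) → ℤ // IsPF a n x y p} := by
  apply Finite.of_injective
    (f := fun p => (fun j (t : Fin n) => decide (p.1 j t.succ - p.1 j t.castSucc = 1)))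
  intro p1 p2 h
  apply Subtype.ext; funext j t
  induction t using Fin.induction with
  | zero => rw [p1.2.1 j, p2.2.1 j]
  | succ t ihh =>
    have hstep1 := p1.2.2.2.1 j t
    have hstep2 := p2.2.2.2.1 j t
    have hd : (p1.1 j t.succ - p1.1 j t.castSucc = 1)
        ↔ (p2.1 j t.succ - p2.1 j t.castSucc = 1) := by
      simpa [decide_eq_decide] using congrFun (congrFun h j) t
    omega

lemma perm_eq_one {a : ℕ} (σ : Equiv.Perm (Fin a)) (h : StrictMono σ) : σ = 1 := by
  have hwf : WellFoundedLT (Fin a) := inferInstance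
  have hr : Set.range (fun i => σ i) = Set.range (id : Fin a → Fin a) := by
    simp [Set.range_eq_univ.2 σ.surjective]
  have h2 := (@StrictMono.range_inj (Fin a) (Fin a) inferInstance inferInstance hwf
    (fun i => σ i) id h strictMono_id).1 hr
  exact Equiv.ext fun i => congrFun h2 i

lemma nat_card_sigma {ι : Type*} [Fintype ι] (f : ι → Type*) [∀ i, Finite (f i)] :
    Nat.card (Σ i, f i) = ∑ i, Nat.card (f i) := by
  have := fun i => Fintype.ofFinite (f i)
  simp [Nat.card_eq_fintype_card]
lemma card_step (a n : ℕ) (x y : Fin a → ℤ) (hxinj : Function.Injective x) :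
    Nat.card {p : Fin a → Fin (n+1+1) → ℤ // IsPF a (n+1) x y p}
      = ∑ v : Fin a → Bool,
          Nat.card {q : Fin a → Fin (n+1) → ℤ //
            IsPF a n (fun j => x j + if v j then 1 else -1) y q} := by
  rw [← nat_card_sigma]
  apply Nat.card_congr
  refine ⟨fun p => ⟨fun j => decide (p.1 j 1 = x j + 1), ⟨fun j t => p.1 j t.succ, ?_⟩⟩,
    fun s => ⟨fun j => Fin.cases (x j) (s.2.1 j), ?_⟩, ?_, ?_⟩
  · obtain ⟨p, h1, h2, h3, h4⟩ := p
    refine ⟨?_, ?_, ?_, ?_⟩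
    · intro j
      have hstep := h3 j 0
      rw [Fin.castSucc_zero, h1 j, Fin.succ_zero_eq_one] at hstep
      show p j 1 = x j + if (decide (p j 1 = x j + 1)) = true then 1 else -1
      rcases hstep with hs | hs
      · rw [decide_eq_true (show p j 1 = x j + 1 by omega)]
        rw [if_pos (rfl : (true : Bool) = true)]
        omega
      · rw [decide_eq_false (show ¬ p j 1 = x j + 1 by omega)]
        rw [if_neg (by simp : ¬ (false = true))]
        omega
    · intro j
      show p j (Fin.last n).succ = y j
      rw [Fin.succ_last]
      exact h2 j
    · intro j t
      have := h3 j t.succ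
      rwa [← Fin.succ_castSucc] at this
    · intro t j k hjk
      exact h4 t.succ j k hjk
  · obtain ⟨v, q, g1, g2, g3, g4⟩ := s
    refine ⟨fun j => by simp, fun j => ?_, fun j t => ?_, fun t j k hjk => ?_⟩
    · show (Fin.cases (x j) (q j) : ∀ _ : Fin (n+1+1), ℤ) (Fin.last (n+1)) = y j
      simp only [Fin.cases_succ]
      exact g2 j
    · induction t using Fin.cases with
      | zero =>
        show (Fin.cases (x j) (q j) : ∀ _ : Fin (n+1+1), ℤ) (Fin.succ 0)
          - (Fin.cases (x j) (q j) : ∀ _ : Fin (n+1+1), ℤ) (Fin.castSucc 0) = 1 ∨ _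
        simp only [Fin.castSucc_zero, Fin.cases_succ, Fin.cases_zero]
        have := g1 j
        by_cases hv : v j <;> simp [hv] at this ⊢ <;> omega
      | succ t' =>
        show (Fin.cases (x j) (q j) : ∀ _ : Fin (n+1+1), ℤ) (Fin.succ t'.succ)
          - (Fin.cases (x j) (q j) : ∀ _ : Fin (n+1+1), ℤ) (Fin.castSucc t'.succ) = 1 ∨ _
        simp only [← Fin.succ_castSucc, Fin.cases_succ]
        exact g3 j t'
    · induction t using Fin.cases with
      | zero =>
        show (Fin.cases (x j) (q j) : ∀ _ : Fin (n+1+1), ℤ) 0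
          ≠ (Fin.cases (x k) (q k) : ∀ _ : Fin (n+1+1), ℤ) 0
        simp only [Fin.cases_zero]
        exact fun h => hjk (hxinj h)
      | succ t' =>
        show (Fin.cases (x j) (q j) : ∀ _ : Fin (n+1+1), ℤ) t'.succ
          ≠ (Fin.cases (x k) (q k) : ∀ _ : Fin (n+1+1), ℤ) t'.succ
        simp only [Fin.cases_succ]
        exact g4 t' j k hjk
  · intro p
    apply Subtype.ext
    funext j t
    induction t using Fin.cases with
    | zero => simpa using (p.2.1 j).symm
    | succ t' => simp
  · have key : ∀ (v₁ v₂ : Fin a → Bool), v₁ = v₂ →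
        ∀ (q₁ : {q : Fin a → Fin (n+1) → ℤ // IsPF a n (fun j => x j + if v₁ j then 1 else -1) y q})
          (q₂ : {q : Fin a → Fin (n+1) → ℤ // IsPF a n (fun j => x j + if v₂ j then 1 else -1) y q}),
          (q₁ : Fin a → Fin (n+1) → ℤ) = q₂ →
          (⟨v₁, q₁⟩ : Σ v : Fin a → Bool, {q : Fin a → Fin (n+1) → ℤ //
              IsPF a n (fun j => x j + if v j then 1 else -1) y q}) = ⟨v₂, q₂⟩ := by
      rintro v₁ v₂ rfl q₁ q₂ h
      exact congrArg _ (Subtype.ext h)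
    rintro ⟨v, q, hq⟩
    have hq0 : ∀ j, q j 0 = x j + (if v j then 1 else -1) := hq.1
    apply key
    · funext j
      have hp1 : (Fin.cases (x j) (q j) : ∀ _ : Fin (n+1+1), ℤ) 1 = q j 0 := by
        rw [show (1 : Fin (n+1+1)) = Fin.succ 0 from (Fin.succ_zero_eq_one).symm]
        exact Fin.cases_succ 0
      show decide ((Fin.cases (x j) (q j) : ∀ _ : Fin (n+1+1), ℤ) 1 = x j + 1) = v j
      rw [hp1, hq0 j]
      by_cases hvj : v j <;> simp [hvj] <;> try omega
    · funext j t
      show (Fin.cases (x j) (q j) : ∀ _ : Fin (n+1+1), ℤ) t.succ = q j t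
      exact Fin.cases_succ t

lemma det_zero_aux {a : ℕ} (x y : Fin a → ℤ)
    (hx2 : ∀ j k : Fin a, j < k → x j + 2 ≤ x k)
    (hy : ∀ j k : Fin a, j < k → y j < y k) :
    Matrix.det (Matrix.of fun j k : Fin a => (w 0 (y k - x j) : ℝ))
      = ∏ j : Fin a, (if y j = x j then (1:ℝ) else 0) := by
  rw [Matrix.det_apply]
  rw [Finset.sum_eq_single (1 : Equiv.Perm (Fin a))]
  · simp only [Equiv.Perm.sign_one, one_smul, Equiv.Perm.one_apply, Matrix.of_apply]
    apply Finset.prod_congr rfl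
    intro i _
    show ((w 0 (y i - x i) : ℝ)) = _
    rcases eq_or_ne (y i) (x i) with h | h
    · rw [if_pos h, show w 0 (y i - x i) = 1 by simp [w, h]]
      norm_num
    · rw [if_neg h, show w 0 (y i - x i) = 0 by simp [w, sub_eq_zero, h]]
      norm_num
  · intro σ _ hσ
    by_cases hc : ∀ i, y i = x (σ i)
    · exfalso
      apply hσ
      apply perm_eq_one
      intro i k hik
      have h1 : y i < y k := hy i k hik
      rw [hc i, hc k] at h1
      rcases lt_trichotomy (σ i) (σ k) with h | h | h
      · exact h
      · rw [h] at h1; exact absurd h1 (lt_irrefl _)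
      · have := hx2 (σ k) (σ i) h; omega
    · push_neg at hc
      obtain ⟨i, hi⟩ := hc
      rw [Finset.prod_eq_zero (Finset.mem_univ i), smul_zero]
      show ((w 0 (y i - x (σ i)) : ℝ)) = 0
      rw [show w 0 (y i - x (σ i)) = 0 by simp [w, sub_eq_zero, hi]]
      norm_num
  · intro h
    exact absurd (Finset.mem_univ _) h

lemma lgv_main (n : ℕ) : ∀ (a : ℕ) (x y : Fin a → ℤ),
    (∀ j k : Fin a, j < k → x j + 2 ≤ x k) →
    (∀ j k : Fin a, (2:ℤ) ∣ x j - x k) →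
    (∀ j k : Fin a, j < k → y j < y k) →
    (Nat.card {p : Fin a → Fin (n+1) → ℤ // IsPF a n x y p} : ℝ)
      = Matrix.det (Matrix.of fun j k : Fin a => (w n (y k - x j) : ℝ)) := by
  induction n with
  | zero =>
    intro a x y hx2 hxp hy
    have hxinj : Function.Injective x := by
      intro j k h
      rcases lt_trichotomy j k with hh | hh | hh
      · have := hx2 j k hh; omega
      · exact hh
      · have := hx2 k j hh; omega
    rw [det_zero_aux x y hx2 hy]
    by_cases hall : ∀ j, y j = x j
    · have : ∀ j, (if y j = x j then (1:ℝ) else 0) = 1 := fun j => if_pos (hall j)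
      rw [Finset.prod_congr rfl (fun j _ => this j), Finset.prod_const_one]
      haveI : Unique {p : Fin a → Fin 1 → ℤ // IsPF a 0 x y p} := by
        refine ⟨⟨⟨fun j _ => x j, fun j => rfl, fun j => (hall j).symm, fun j t => t.elim0,
          fun t j k hjk h => hjk (hxinj h)⟩⟩, ?_⟩
        rintro ⟨p, h1, h2, h3, h4⟩
        apply Subtype.ext
        funext j t
        have ht : t = 0 := Subsingleton.elim t 0
        rw [ht]
        exact h1 j
      rw [Nat.card_unique]
      norm_num
    · push_neg at hall
      obtain ⟨j0, hj0⟩ := hall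
      haveI : IsEmpty {p : Fin a → Fin 1 → ℤ // IsPF a 0 x y p} := by
        refine ⟨fun p => hj0 ?_⟩
        obtain ⟨p, h1, h2, h3, h4⟩ := p
        rw [← h2 j0, show Fin.last 0 = 0 from rfl, h1 j0]
      rw [Nat.card_of_isEmpty]
      rw [Finset.prod_eq_zero (Finset.mem_univ j0) (show (if y j0 = x j0 then (1:ℝ) else 0) = 0 from if_neg hj0)]
      norm_num
  | succ n ih =>
    intro a x y hx2 hxp hy
    have hxinj : Function.Injective x := by
      intro j k h
      rcases lt_trichotomy j k with hh | hh | hh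
      · have := hx2 j k hh; omega
      · exact hh
      · have := hx2 k j hh; omega
    rw [card_step a n x y hxinj]
    have hperv : ∀ v : Fin a → Bool,
        (Nat.card {q : Fin a → Fin (n+1) → ℤ //
            IsPF a n (fun j => x j + if v j then 1 else -1) y q} : ℝ)
          = Matrix.det (Matrix.of fun j k : Fin a =>
              (w n (y k - (x j + if v j then 1 else -1)) : ℝ)) := by
      intro v
      by_cases hvinj : Function.Injective (fun j => x j + if v j then (1:ℤ) else -1)
      · refine ih a (fun j => x j + if v j then 1 else -1) y ?_ ?_ hy
        · intro j k hjk
          have h1 := hx2 j k hjk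
          have h2 := hxp j k
          have h3 : x j + (if v j then (1:ℤ) else -1) ≠ x k + (if v k then (1:ℤ) else -1) :=
            fun h => absurd (hvinj h) (by omega)
          rcases Bool.dichotomy (v j) with hj | hj <;> rcases Bool.dichotomy (v k) with hk | hk <;>
            simp only [hj, hk, if_true, if_false] at h3 ⊢ <;> omega
        · intro j k
          have h2 := hxp j k
          rcases Bool.dichotomy (v j) with hj | hj <;> rcases Bool.dichotomy (v k) with hk | hk <;>
            simp only [hj, hk, if_true, if_false] <;> omega
      · rw [Function.not_injective_iff] at hvinj
        obtain ⟨j, k, hzz, hjk⟩ := hvinj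
        haveI : IsEmpty {q : Fin a → Fin (n+1) → ℤ //
            IsPF a n (fun j => x j + if v j then 1 else -1) y q} := by
          refine ⟨fun q => ?_⟩
          obtain ⟨q, g1, g2, g3, g4⟩ := q
          exact g4 0 j k hjk (by rw [g1 j, g1 k]; exact hzz)
        rw [Nat.card_of_isEmpty]
        rw [Matrix.det_zero_of_row_eq hjk
          (by funext k'; show ((w n (y k' - _) : ℝ)) = _; rw [hzz]; rfl)]
        norm_num
    have hrow : (Matrix.of fun j k : Fin a => (w (n+1) (y k - x j) : ℝ))
        = fun j => ∑ b : Bool, (fun k => (w n (y k - (x j + if b then 1 else -1)) : ℝ)) := by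
      funext j k
      simp only [Matrix.of_apply, Finset.sum_apply, Fintype.sum_bool, if_true, if_false,
        Bool.false_eq_true]
      rw [show (w (n+1) (y k - x j)) = w n (y k - x j + 1) + w n (y k - x j - 1) from rfl,
        show y k - (x j + 1) = y k - x j - 1 by ring,
        show y k - (x j + -1) = y k - x j + 1 by ring]
      push_cast
      ring
    have hms := (Matrix.detRowAlternating (R := ℝ) (n := Fin a)).toMultilinearMap.map_sum
      (g := fun (j : Fin a) (b : Bool) =>
        fun k : Fin a => (w n (y k - (x j + if b then 1 else -1)) : ℝ))
    have hdet : Matrix.det (Matrix.of fun j k : Fin a => (w (n+1) (y k - x j) : ℝ))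
        = ∑ r : Fin a → Bool, Matrix.det (Matrix.of fun j k : Fin a =>
            (w n (y k - (x j + if r j then 1 else -1)) : ℝ)) := by
      show Matrix.detRowAlternating _ = _
      rw [hrow]
      exact hms
    rw [hdet]
    push_cast
    exact Finset.sum_congr rfl (fun v _ => hperv v)


/-- Lindström–Gessel–Viennot for non-intersecting simple symmetric walks:
the number of families of `a` non-intersecting simple symmetric lattice paths
from `(0, 2j)` to `(b+c, c-b+2j)`, `0 ≤ j ≤ a-1`, equals
`det(C(b+c, c+k-j))_{j,k=0}^{a-1}`. -/
theorem lgv_nonintersecting_walks (a b c : ℕ) (ha : 0 < a) (hb : 0 < b) (hc : 0 < c)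
    (hbc : b ≤ c) :
    (Nat.card {p : Fin a → Fin (b + c + 1) → ℤ //
        (∀ j : Fin a, p j 0 = 2 * (j : ℤ)) ∧
        (∀ j : Fin a, p j (Fin.last (b + c)) = (c : ℤ) - b + 2 * (j : ℤ)) ∧
        (∀ (j : Fin a) (t : Fin (b + c)),
          p j t.succ - p j t.castSucc = 1 ∨ p j t.succ - p j t.castSucc = -1) ∧
        (∀ (t : Fin (b + c + 1)) (j k : Fin a), j ≠ k → p j t ≠ p k t)} : ℝ)
      = Matrix.det (Matrix.of fun j k : Fin a =>
          (chooseZ (b + c) ((c : ℤ) + (k : ℤ) - (j : ℤ)) : ℝ)) := by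
  have hx2 : ∀ j k : Fin a, j < k → 2 * (j:ℤ) + 2 ≤ 2 * (k:ℤ) := by
    intro j k h
    have : (j:ℤ) < k := by exact_mod_cast h
    omega
  have hxp : ∀ j k : Fin a, (2:ℤ) ∣ 2 * (j:ℤ) - 2 * (k:ℤ) := fun j k => ⟨(j:ℤ) - k, by ring⟩
  have hy : ∀ j k : Fin a, j < k →
      (c:ℤ) - b + 2 * (j:ℤ) < (c:ℤ) - b + 2 * (k:ℤ) := by
    intro j k h
    have : (j:ℤ) < k := by exact_mod_cast h
    omega
  have hmain := lgv_main (b+c) a (fun j => 2 * (j:ℤ)) (fun j => (c:ℤ) - b + 2 * (j:ℤ))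
    hx2 hxp hy
  refine hmain.trans ?_
  apply congrArg Matrix.det
  funext j k
  show ((w (b+c) (((c:ℤ) - b + 2 * k) - 2 * j) : ℝ)) = ((chooseZ (b+c) ((c:ℤ) + k - j) : ℝ))
  have h := w_eq_chooseZ (b+c) ((c:ℤ) + k - j)
  rw [show 2 * ((c:ℤ) + k - j) - ((b+c : ℕ) : ℤ) = ((c:ℤ) - b + 2 * k) - 2 * j by push_cast; ring] at h
  exact congrArg (fun m : ℕ => (m : ℝ)) h
end

section
/- The determinant det(C(b+c, c+k−j))_{j,k=0}^{a−1} of binomial coefficients equals ∏_{n=0}^{a−1} n!(b+c+n)! / ((b+n)!(c+n)!). -/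
open Finset

/-- ascending factorial product. -/
lemma bd_asc (d : ℕ) : ∀ t : ℕ, d.factorial * ∏ i ∈ range t, (d + 1 + i) = (d + t).factorial
  | 0 => by simp
  | t + 1 => by
    rw [prod_range_succ, ← mul_assoc, bd_asc d t, ← Nat.add_assoc]
    rw [Nat.factorial_succ, mul_comm]
    congr 1
    omega

/-- Key entrywise identity. -/
lemma bd_key (a b c : ℕ) (j k : Fin a) :
    (((b + (j : ℕ)).factorial : ℚ) * ((c + (a - 1 - (j : ℕ))).factorial : ℚ)) *
      (chooseZ (b + c) ((c : ℤ) + (k : ℤ) - (j : ℤ)) : ℚ)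
    = ((b + c).factorial : ℚ) *
      ((∏ i ∈ range (k : ℕ), ((j : ℚ) + b - i)) *
        (∏ m ∈ Ico ((k : ℕ) + 1) a, ((c : ℚ) + m - (j : ℚ)))) := by
  have hj : (j : ℕ) < a := j.isLt
  have hk : (k : ℕ) < a := k.isLt
  have hcast : ((c : ℤ) + (k : ℤ) - (j : ℤ)) = ((c + (k : ℕ) : ℕ) : ℤ) - (((j : ℕ) : ℕ) : ℤ) := by
    push_cast
    ring
  rcases lt_or_ge (c + (k : ℕ)) (j : ℕ) with hcase | h1
  · -- c + k - j < 0 : both sides vanish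
    have hz : chooseZ (b + c) ((c : ℤ) + (k : ℤ) - (j : ℤ)) = 0 := by
      rw [chooseZ, if_neg]
      rintro ⟨h0, -⟩
      rw [hcast] at h0
      omega
    rw [hz]
    push_cast
    rw [mul_zero]
    have : (∏ m ∈ Ico ((k : ℕ) + 1) a, ((c : ℚ) + m - (j : ℚ))) = 0 := by
      apply Finset.prod_eq_zero (i := (j : ℕ) - c)
      · rw [mem_Ico]
        omega
      · rw [Nat.cast_sub (by omega : c ≤ (j : ℕ))]
        ring
    rw [this, mul_zero, mul_zero]
  rcases lt_or_ge (b + (j : ℕ)) (k : ℕ) with hcase | h2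
  · -- c + k - j > b + c : both sides vanish
    have hz : chooseZ (b + c) ((c : ℤ) + (k : ℤ) - (j : ℤ)) = 0 := by
      rw [chooseZ, if_neg]
      rintro ⟨-, h0⟩
      rw [hcast] at h0
      omega
    rw [hz]
    push_cast
    rw [mul_zero]
    have : (∏ i ∈ range (k : ℕ), ((j : ℚ) + b - i)) = 0 := by
      apply Finset.prod_eq_zero (i := b + (j : ℕ))
      · rw [mem_range]
        omega
      · push_cast
        ring
    rw [this, zero_mul, mul_zero]
  -- main case : 0 ≤ c + k - j ≤ b + c
  set d : ℕ := c + (k : ℕ) - (j : ℕ) with hd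
  have hz : chooseZ (b + c) ((c : ℤ) + (k : ℤ) - (j : ℤ)) = (b + c).choose d := by
    rw [chooseZ, if_pos]
    · congr 1
      rw [hcast]
      omega
    · constructor <;> rw [hcast] <;> push_cast <;> omega
  rw [hz]
  -- rewrite the two rational products as casts of natural products
  have hprod1 : (∏ i ∈ range (k : ℕ), ((j : ℚ) + b - i))
      = (((b + (j : ℕ)).descFactorial (k : ℕ) : ℕ) : ℚ) := by
    rw [Nat.descFactorial_eq_prod_range, Nat.cast_prod]
    apply Finset.prod_congr rfl
    intro i hi
    rw [mem_range] at hi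
    rw [Nat.cast_sub (by omega : i ≤ b + (j : ℕ))]
    push_cast
    ring
  have hprod2 : (∏ m ∈ Ico ((k : ℕ) + 1) a, ((c : ℚ) + m - (j : ℚ)))
      = ((∏ m ∈ Ico ((k : ℕ) + 1) a, (c + m - (j : ℕ)) : ℕ) : ℚ) := by
    rw [Nat.cast_prod]
    apply Finset.prod_congr rfl
    intro m hm
    rw [mem_Ico] at hm
    rw [Nat.cast_sub (by omega : (j : ℕ) ≤ c + m)]
    push_cast
    ring
  rw [hprod1, hprod2]
  rw [← Nat.cast_mul, ← Nat.cast_mul, ← Nat.cast_mul, ← Nat.cast_mul]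
  norm_cast
  -- now a purely natural-number identity
  apply Nat.eq_of_mul_eq_mul_right
    (Nat.mul_pos d.factorial_pos (b + (j : ℕ) - (k : ℕ)).factorial_pos)
  have h1 : (b + (j : ℕ) - (k : ℕ)).factorial * (b + (j : ℕ)).descFactorial (k : ℕ)
      = (b + (j : ℕ)).factorial := Nat.factorial_mul_descFactorial (by omega)
  have h2 : d.factorial * (∏ m ∈ Ico ((k : ℕ) + 1) a, (c + m - (j : ℕ)))
      = (c + (a - 1 - (j : ℕ))).factorial := by
    rw [prod_Ico_eq_prod_range]
    have heq : ∀ i ∈ range (a - ((k : ℕ) + 1)), c + ((k : ℕ) + 1 + i) - (j : ℕ) = d + 1 + i := by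
      intro i _
      omega
    rw [Finset.prod_congr rfl heq, bd_asc]
    congr 1
    omega
  have h3 : (b + c).choose d * (d.factorial * (b + (j : ℕ) - (k : ℕ)).factorial)
      = (b + c).factorial := by
    have hbc : b + c - d = b + (j : ℕ) - (k : ℕ) := by omega
    rw [← hbc, ← mul_assoc]
    exact Nat.choose_mul_factorial_mul_factorial (by omega)
  rw [← h1, ← h2, ← h3]
  ring

/-- The binomial determinant evaluation:
`det(C(b+c, c+k-j))_{j,k=0}^{a-1} = ∏_{n=0}^{a-1} n!(b+c+n)!/((b+n)!(c+n)!)`. -/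
theorem binomial_determinant (a b c : ℕ) (ha : 0 < a) (hb : 0 < b) (hc : 0 < c) :
    Matrix.det (Matrix.of fun j k : Fin a =>
        (chooseZ (b + c) ((c : ℤ) + (k : ℤ) - (j : ℤ)) : ℚ))
      = ∏ n ∈ Finset.range a,
          ((Nat.factorial n : ℚ) * (Nat.factorial (b + c + n) : ℚ)) /
            ((Nat.factorial (b + n) : ℚ) * (Nat.factorial (c + n) : ℚ)) := by
  classical
  set M : Matrix (Fin a) (Fin a) ℚ :=
    Matrix.of fun j k : Fin a => (chooseZ (b + c) ((c : ℤ) + (k : ℤ) - (j : ℤ)) : ℚ) with hM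
  -- the polynomials
  set p : Fin a → Polynomial ℚ := fun k =>
    (∏ i ∈ range (k : ℕ), (Polynomial.X + Polynomial.C ((b : ℚ) - i))) *
    (∏ m ∈ Ico ((k : ℕ) + 1) a, (Polynomial.C ((c : ℚ) + m) - Polynomial.X)) with hp
  have hdeg : ∀ k : Fin a, (p k).natDegree < a := by
    intro k
    have h1 : (∏ i ∈ range (k : ℕ), (Polynomial.X + Polynomial.C ((b : ℚ) - i))).natDegree
        ≤ (k : ℕ) := by
      refine le_trans (Polynomial.natDegree_prod_le _ _) ?_
      refine le_trans (Finset.sum_le_card_nsmul _ _ 1 ?_) (by simp)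
      intro i _
      refine le_trans (Polynomial.natDegree_add_le _ _) ?_
      simp only [Polynomial.natDegree_X, Polynomial.natDegree_C, max_le_iff]
      exact ⟨le_rfl, zero_le_one⟩
    have h2 : (∏ m ∈ Ico ((k : ℕ) + 1) a, (Polynomial.C ((c : ℚ) + m) - Polynomial.X)).natDegree
        ≤ a - ((k : ℕ) + 1) := by
      refine le_trans (Polynomial.natDegree_prod_le _ _) ?_
      refine le_trans (Finset.sum_le_card_nsmul _ _ 1 ?_) (by simp [Nat.card_Ico])
      intro i _
      refine le_trans (Polynomial.natDegree_sub_le _ _) ?_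
      simp only [Polynomial.natDegree_X, Polynomial.natDegree_C, max_le_iff]
      exact ⟨zero_le_one, le_rfl⟩
    have hk := k.isLt
    calc (p k).natDegree ≤ _ + _ := Polynomial.natDegree_mul_le
      _ < a := by omega
  have heval : ∀ (k : Fin a) (x : ℚ), (p k).eval x
      = (∏ i ∈ range (k : ℕ), (x + b - i)) * (∏ m ∈ Ico ((k : ℕ) + 1) a, ((c : ℚ) + m - x)) := by
    intro k x
    rw [hp]
    simp only [Polynomial.eval_mul, Polynomial.eval_prod, Polynomial.eval_add,
      Polynomial.eval_sub, Polynomial.eval_X, Polynomial.eval_C]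
    congr 1
    · exact Finset.prod_congr rfl fun i _ => by ring
  set Cm : Matrix (Fin a) (Fin a) ℚ := Matrix.of fun i k : Fin a => (p k).coeff (i : ℕ) with hCm
  have hfact : ∀ (x : Fin a → ℚ),
      Matrix.of (fun j k : Fin a => (p k).eval (x j)) = Matrix.vandermonde x * Cm := by
    intro x
    ext j k
    rw [Matrix.of_apply, Matrix.mul_apply, Polynomial.eval_eq_sum_range' (hdeg k) (x j),
      ← Fin.sum_univ_eq_sum_range (fun i => (p k).coeff i * x j ^ i) a]
    exact Finset.sum_congr rfl fun i _ => by
      simp [Matrix.vandermonde, hCm, mul_comm]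
  set A : Matrix (Fin a) (Fin a) ℚ :=
    Matrix.of (fun j k : Fin a => (p k).eval (((j : ℕ) : ℚ))) with hA
  set Q : Matrix (Fin a) (Fin a) ℚ :=
    Matrix.of (fun m k : Fin a => (p k).eval ((c : ℚ) + (m : ℕ))) with hQ
  -- A and Q have the same determinant via Vandermonde factorization
  have hV : (Matrix.vandermonde fun j : Fin a => ((j : ℕ) : ℚ)).det
      = (Matrix.vandermonde fun m : Fin a => (c : ℚ) + (m : ℕ)).det := by
    rw [Matrix.det_vandermonde, Matrix.det_vandermonde]
    exact Finset.prod_congr rfl fun i _ => Finset.prod_congr rfl fun j _ => by ring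
  have hAQ : A.det = Q.det := by
    rw [hA, hQ, hfact (fun j : Fin a => ((j : ℕ) : ℚ)),
      hfact (fun m : Fin a => (c : ℚ) + (m : ℕ)), Matrix.det_mul, Matrix.det_mul, hV]
  -- Q is upper triangular
  have hQtri : Q.BlockTriangular id := by
    intro m k hmk
    simp only [id] at hmk
    rw [hQ, Matrix.of_apply, heval]
    have : (∏ i ∈ Ico ((k : ℕ) + 1) a, ((c : ℚ) + i - ((c : ℚ) + (m : ℕ)))) = 0 := by
      apply Finset.prod_eq_zero (i := (m : ℕ))
      · rw [mem_Ico]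
        exact ⟨by exact_mod_cast hmk, m.isLt⟩
      · ring
    rw [this, mul_zero]
  have hdetQ : Q.det = ∏ k : Fin a, Q k k := Matrix.det_of_upperTriangular hQtri
  -- diagonal entries
  have hdiag : ∀ k : Fin a, Q k k
      = (((b + c + (k : ℕ)).descFactorial (k : ℕ) : ℕ) : ℚ) * (((a - 1 - (k : ℕ)).factorial : ℕ) : ℚ) := by
    intro k
    have hk := k.isLt
    rw [hQ, Matrix.of_apply, heval]
    congr 1
    · rw [Nat.descFactorial_eq_prod_range, Nat.cast_prod]
      apply Finset.prod_congr rfl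
      intro i hi
      rw [mem_range] at hi
      rw [Nat.cast_sub (by omega : i ≤ b + c + (k : ℕ))]
      push_cast
      ring
    · have : (∏ m ∈ Ico ((k : ℕ) + 1) a, ((c : ℚ) + m - ((c : ℚ) + (k : ℕ))))
          = ((∏ m ∈ Ico ((k : ℕ) + 1) a, (m - (k : ℕ)) : ℕ) : ℚ) := by
        rw [Nat.cast_prod]
        apply Finset.prod_congr rfl
        intro m hm
        rw [mem_Ico] at hm
        rw [Nat.cast_sub (by omega : (k : ℕ) ≤ m)]
        push_cast
        ring
      rw [this]
      congr 1
      rw [prod_Ico_eq_prod_range]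
      have heq : ∀ i ∈ range (a - ((k : ℕ) + 1)), (k : ℕ) + 1 + i - (k : ℕ) = i + 1 := by
        intro i _
        omega
      rw [Finset.prod_congr rfl heq, prod_range_add_one_eq_factorial]
      congr 1
      omega
  -- row scaling
  set F : Fin a → ℚ := fun j =>
    ((b + (j : ℕ)).factorial : ℚ) * ((c + (a - 1 - (j : ℕ))).factorial : ℚ) with hF
  have hscale : Matrix.of (fun j k : Fin a => F j * M j k)
      = Matrix.of (fun j k : Fin a => ((b + c).factorial : ℚ) * A j k) := by
    ext j k
    rw [Matrix.of_apply, Matrix.of_apply, hA, Matrix.of_apply, heval]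
    exact bd_key a b c j k
  have e1 : (∏ j : Fin a, F j) * M.det = ((b + c).factorial : ℚ) ^ a * A.det := by
    rw [← Matrix.det_mul_column F M, hscale]
    have : Matrix.of (fun j k : Fin a => ((b + c).factorial : ℚ) * A j k)
        = ((b + c).factorial : ℚ) • A := by
      ext j k
      simp [Matrix.smul_apply]
    rw [this, Matrix.det_smul]
    simp
  rw [hAQ, hdetQ] at e1
  -- compute both sides as products over range a
  have hFprod : (∏ j : Fin a, F j)
      = (∏ n ∈ range a, ((b + n).factorial : ℚ)) * (∏ n ∈ range a, ((c + n).factorial : ℚ)) := by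
    rw [hF, Fin.prod_univ_eq_prod_range
      (fun n => ((b + n).factorial : ℚ) * ((c + (a - 1 - n)).factorial : ℚ)) a,
      Finset.prod_mul_distrib]
    congr 1
    exact Finset.prod_range_reflect (fun n => ((c + n).factorial : ℚ)) a
  have hRprod : ((b + c).factorial : ℚ) ^ a * (∏ k : Fin a, Q k k)
      = (∏ n ∈ range a, ((b + c + n).factorial : ℚ)) * (∏ n ∈ range a, ((n).factorial : ℚ)) := by
    simp only [hdiag]
    rw [Fin.prod_univ_eq_prod_range
        (fun n => (((b + c + n).descFactorial n : ℕ) : ℚ) * (((a - 1 - n).factorial : ℕ) : ℚ)) a,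
      Finset.prod_mul_distrib]
    have hpow : ((b + c).factorial : ℚ) ^ a = ∏ _n ∈ range a, ((b + c).factorial : ℚ) := by
      simp
    rw [hpow, ← mul_assoc, ← Finset.prod_mul_distrib]
    congr 1
    · apply Finset.prod_congr rfl
      intro n _
      rw [← Nat.cast_mul]
      congr 1
      have := Nat.factorial_mul_descFactorial (show n ≤ b + c + n by omega)
      simpa using this
    · exact Finset.prod_range_reflect (fun n => ((n).factorial : ℚ)) a
  rw [hFprod, hRprod] at e1
  have hne : (∏ n ∈ range a, ((b + n).factorial : ℚ)) * (∏ n ∈ range a, ((c + n).factorial : ℚ))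
      ≠ 0 := by
    apply mul_ne_zero <;>
      · rw [Finset.prod_ne_zero_iff]
        exact fun n _ => Nat.cast_ne_zero.mpr (Nat.factorial_ne_zero _)
  rw [Finset.prod_div_distrib, Finset.prod_mul_distrib, Finset.prod_mul_distrib, eq_div_iff hne]
  linear_combination e1
end
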